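/- For d = 2 and φ ∈ ℝ², one has |A_n(u)|_Θ (φ,0)·(φ,0) = ρ|v_n| |φ|² + 2α φ_n², equivalently (1/2)|A_n(u)|_Θ (v,0)·(φ,0) = (ρ/2)|v_n| v·φ + α v_n φ_n for all v, φ ∈ ℝ², where α = (ρ|v_n| − √(4θ²+ρ²v_n²))²/(4√(4θ²+ρ²v_n²)). -/

import Mathlib

open Matrix

set_option maxHeartbeats 2000000 in
/-- For `d = 2` and `φ ∈ ℝ²`: `|Aₙ(u)|_Θ (φ,0)·(φ,0) = ρ|vₙ| |φ|² + 2α φₙ²`, and for all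
`w, φ ∈ ℝ²`: `(1/2)|Aₙ(u)|_Θ (w,0)·(φ,0) = (ρ/2)|vₙ| w·φ + α wₙ φₙ`, where
`α = (ρ|vₙ| − √(4θ²+ρ²vₙ²))²/(4√(4θ²+ρ²vₙ²))`. -/
theorem stmt_11 (ρ θ vn : ℝ) (hρ : 0 < ρ) (hθ : 0 < θ)
    (n : Fin 2 → ℝ) (hn : n 0 ^ 2 + n 1 ^ 2 = 1)
    (Th A : Matrix (Fin 3) (Fin 3) ℝ)
    (hTh : Th = Matrix.diagonal ![1, 1, θ])
    (hA : A = !![ρ * vn, 0, n 0; 0, ρ * vn, n 1; n 0, n 1, 0])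
    (R : Matrix (Fin 3) (Fin 3) ℝ) (dv : Fin 3 → ℝ)
    (hR : R * Rᵀ = 1)
    (hdec : Th * A * Th = R * Matrix.diagonal dv * Rᵀ)
    (Mabs : Matrix (Fin 3) (Fin 3) ℝ)
    (hMabs : Mabs = Th⁻¹ * (R * Matrix.diagonal (fun i => |dv i|) * Rᵀ) * Th⁻¹)
    (α : ℝ)
    (hα : α = (ρ * |vn| - Real.sqrt (4 * θ ^ 2 + ρ ^ 2 * vn ^ 2)) ^ 2 /
      (4 * Real.sqrt (4 * θ ^ 2 + ρ ^ 2 * vn ^ 2))) :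
    (∀ φ : Fin 2 → ℝ,
      (Mabs *ᵥ ![φ 0, φ 1, 0]) ⬝ᵥ ![φ 0, φ 1, 0] =
        ρ * |vn| * (φ 0 ^ 2 + φ 1 ^ 2) + 2 * α * (φ 0 * n 0 + φ 1 * n 1) ^ 2) ∧
    ∀ w φ : Fin 2 → ℝ,
      (1 / 2) * ((Mabs *ᵥ ![w 0, w 1, 0]) ⬝ᵥ ![φ 0, φ 1, 0]) =
        (ρ / 2) * |vn| * (w 0 * φ 0 + w 1 * φ 1)
          + α * (w 0 * n 0 + w 1 * n 1) * (φ 0 * n 0 + φ 1 * n 1) := by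
  set a : ℝ := ρ * vn with ha
  set b : ℝ := ρ * |vn| with hb
  set s : ℝ := Real.sqrt (4 * θ ^ 2 + ρ ^ 2 * vn ^ 2) with hsdef
  set n0 : ℝ := n 0
  set n1 : ℝ := n 1
  have hspos : 0 < s := Real.sqrt_pos.mpr (by positivity)
  have hsne : s ≠ 0 := ne_of_gt hspos
  have hs2 : s ^ 2 = a ^ 2 + 4 * θ ^ 2 := by
    rw [hsdef, Real.sq_sqrt (by positivity)]; ring
  have hb2 : b ^ 2 = a ^ 2 := by
    rw [hb, ha]; rw [mul_pow, mul_pow, sq_abs]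
  have hb0 : 0 ≤ b := mul_nonneg hρ.le (abs_nonneg _)
  have h2αs : 2 * α * s = a ^ 2 + 2 * θ ^ 2 - b * s := by
    rw [hα]
    linear_combination ((b - s) ^ 2 / 2) * mul_inv_cancel₀ hsne + (1/2) * hb2 + (1/2) * hs2
  -- the matrix B = Th * A * Th
  set Bm : Matrix (Fin 3) (Fin 3) ℝ := !![a, 0, θ*n0; 0, a, θ*n1; θ*n0, θ*n1, 0] with hBm
  have hB : Th * A * Th = Bm := by
    rw [hTh, hA, hBm]
    ext i j
    fin_cases i <;> fin_cases j <;>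
      simp [Matrix.mul_apply, Fin.sum_univ_three, Matrix.diagonal] <;> ring
  -- the candidate matrix
  set C' : Matrix (Fin 3) (Fin 3) ℝ :=
    !![b*s + (a^2+2*θ^2-b*s)*n0^2, (a^2+2*θ^2-b*s)*n0*n1, a*θ*n0;
       (a^2+2*θ^2-b*s)*n0*n1, b*s + (a^2+2*θ^2-b*s)*n1^2, a*θ*n1;
       a*θ*n0, a*θ*n1, 2*θ^2] with hC'
  set C : Matrix (Fin 3) (Fin 3) ℝ := s⁻¹ • C' with hC
  have hCC' : C' * C' = (a^2+4*θ^2) • (Bm * Bm) := by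
    rw [hC', hBm]
    ext i j
    fin_cases i <;> fin_cases j <;>
      simp [Matrix.mul_apply, Fin.sum_univ_three]
    · linear_combination (b^2*n0^4 + b^2*n0^2*n1^2 + (-2)*b^2*n0^2 + b^2) * hs2 + (a^2*n0^4 + a^2*n0^2*n1^2 + (-2)*a^2*n0^2 + a^2 + 4*θ^2*n0^4 + 4*θ^2*n0^2*n1^2 + (-8)*θ^2*n0^2 + 4*θ^2) * hb2 + (2*a^4*n0^2 + (-2)*a^2*b*s*n0^2 + 8*a^2*θ^2*n0^2 + (-4)*b*s*θ^2*n0^2 + 4*θ^4*n0^2) * hn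
    · linear_combination (b^2*n0^3*n1 + b^2*n0*n1^3 + (-2)*b^2*n0*n1) * hs2 + (a^2*n0^3*n1 + a^2*n0*n1^3 + (-2)*a^2*n0*n1 + 4*θ^2*n0^3*n1 + 4*θ^2*n0*n1^3 + (-8)*θ^2*n0*n1) * hb2 + (2*a^4*n0*n1 + (-2)*a^2*b*s*n0*n1 + 8*a^2*θ^2*n0*n1 + (-4)*b*s*θ^2*n0*n1 + 4*θ^4*n0*n1) * hn
    · linear_combination (a^3*θ*n0 + (-1)*a*b*s*θ*n0 + 2*a*θ^3*n0) * hn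
    · linear_combination (b^2*n0^3*n1 + b^2*n0*n1^3 + (-2)*b^2*n0*n1) * hs2 + (a^2*n0^3*n1 + a^2*n0*n1^3 + (-2)*a^2*n0*n1 + 4*θ^2*n0^3*n1 + 4*θ^2*n0*n1^3 + (-8)*θ^2*n0*n1) * hb2 + (2*a^4*n0*n1 + (-2)*a^2*b*s*n0*n1 + 8*a^2*θ^2*n0*n1 + (-4)*b*s*θ^2*n0*n1 + 4*θ^4*n0*n1) * hn
    · linear_combination (b^2*n0^2*n1^2 + b^2*n1^4 + (-2)*b^2*n1^2 + b^2) * hs2 + (a^2*n0^2*n1^2 + a^2*n1^4 + (-2)*a^2*n1^2 + a^2 + 4*θ^2*n0^2*n1^2 + 4*θ^2*n1^4 + (-8)*θ^2*n1^2 + 4*θ^2) * hb2 + (2*a^4*n1^2 + (-2)*a^2*b*s*n1^2 + 8*a^2*θ^2*n1^2 + (-4)*b*s*θ^2*n1^2 + 4*θ^4*n1^2) * hn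
    · linear_combination (a^3*θ*n1 + (-1)*a*b*s*θ*n1 + 2*a*θ^3*n1) * hn
    · linear_combination (a^3*θ*n0 + (-1)*a*b*s*θ*n0 + 2*a*θ^3*n0) * hn
    · linear_combination (a^3*θ*n1 + (-1)*a*b*s*θ*n1 + 2*a*θ^3*n1) * hn
    · linear_combination ((-4)*θ^4) * hn
  have hCsq : C * C = Bm * Bm := by
    rw [hC, Matrix.smul_mul, Matrix.mul_smul, smul_smul, hCC', smul_smul]
    rw [← hs2]
    rw [show s⁻¹ * s⁻¹ * s ^ 2 = 1 by field_simp]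
    rw [one_smul]
  have hCherm : C.IsHermitian := by
    rw [hC, hC']
    ext i j
    fin_cases i <;> fin_cases j <;> simp [Matrix.conjTranspose_apply]
  have hCps : C.PosSemidef := by
    refine Matrix.posSemidef_iff_dotProduct_mulVec.mpr ⟨hCherm, fun x => ?_⟩
    rw [hC, Matrix.smul_mulVec, dotProduct_smul, smul_eq_mul]
    refine mul_nonneg (inv_nonneg.mpr hspos.le) ?_
    have hx : star x ⬝ᵥ (C' *ᵥ x) =
        b*s*(n1*x 0 - n0*x 1)^2 + (a*(n0*x 0 + n1*x 1) + θ*x 2)^2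
          + 2*θ^2*(n0*x 0 + n1*x 1)^2 + θ^2*(x 2)^2 := by
      simp [hC', Matrix.mulVec, dotProduct, Fin.sum_univ_three]
      linear_combination (-(b*s*(x 0^2 + x 1^2))) * hn
    rw [hx]
    nlinarith [mul_nonneg (mul_nonneg hb0 hspos.le) (sq_nonneg (n1*x 0 - n0*x 1)),
      sq_nonneg (a*(n0*x 0 + n1*x 1) + θ*x 2),
      mul_nonneg (sq_nonneg θ) (sq_nonneg (n0*x 0 + n1*x 1)),
      mul_nonneg (sq_nonneg θ) (sq_nonneg (x 2))]
  set N : Matrix (Fin 3) (Fin 3) ℝ := R * Matrix.diagonal (fun i => |dv i|) * Rᵀ with hN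
  have hconj : Rᴴ = Rᵀ := by ext i j; simp [Matrix.conjTranspose_apply]
  have hRtR : Rᵀ * R = 1 := mul_eq_one_comm.mp hR
  have hmul : ∀ f g : Fin 3 → ℝ,
      (R * Matrix.diagonal f * Rᵀ) * (R * Matrix.diagonal g * Rᵀ) =
        R * Matrix.diagonal (fun i => f i * g i) * Rᵀ := by
    intro f g
    have h1 : Rᵀ * (R * (Matrix.diagonal g * Rᵀ)) = Matrix.diagonal g * Rᵀ := by
      rw [← Matrix.mul_assoc, hRtR, one_mul]
    simp only [Matrix.mul_assoc, h1, ← Matrix.diagonal_mul_diagonal]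
  have hNps : N.PosSemidef := by
    rw [hN, ← hconj]
    exact (Matrix.posSemidef_diagonal_iff.mpr fun i => abs_nonneg _).mul_mul_conjTranspose_same R
  have hNsq : N * N = Bm * Bm := by
    have hBdec : Bm = R * Matrix.diagonal dv * Rᵀ := hB ▸ hdec
    have habs : (fun i : Fin 3 => |dv i| * |dv i|) = fun i => dv i * dv i :=
      funext fun i => abs_mul_abs_self _
    rw [hN, hmul, hBdec, hmul, habs]
  have hNC : N = C := by
    open MatrixOrder Matrix.Norms.L2Operator in
    exact (CFC.mul_self_eq_mul_self_iff N C hNps.nonneg hCps.nonneg).mp (by rw [hNsq, hCsq])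
  have hThi : Th⁻¹ = Matrix.diagonal ![1, 1, θ⁻¹] := by
    apply Matrix.inv_eq_right_inv
    rw [hTh]
    ext i j
    fin_cases i <;> fin_cases j <;>
      simp [Matrix.diagonal, Matrix.mul_apply, Fin.sum_univ_three, Matrix.one_apply,
        mul_inv_cancel₀ hθ.ne']
  rw [hNC, hC, hThi] at hMabs
  constructor
  · intro φ
    rw [hMabs, hC']
    simp [Matrix.mulVec, dotProduct, Fin.sum_univ_three, Matrix.mul_apply,
      Matrix.diagonal]
    field_simp
    linear_combination (-((φ 0*n0+φ 1*n1)^2)) * h2αs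
  · intro w φ
    rw [hMabs, hC']
    simp [Matrix.mulVec, dotProduct, Fin.sum_univ_three, Matrix.mul_apply,
      Matrix.diagonal]
    field_simp
    linear_combination (2*s*(w 0*φ 0 + w 1*φ 1)) * hb +
      (-((w 0*n0+w 1*n1)*(φ 0*n0+φ 1*n1))) * h2αs
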